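/- Let λ ∈ (0,1]. For x, y ∈ (0,1] with 1 − x(1+y)/2 + √((1−x)(1−xy)) > 0, define f₁(x,y) := (1−√(1−λ))²/(2xy), f₂(x) := (1+√(1−λ))²/(2x), and f₃(x,y) := λ / (1 − x(1+y)/2 + √((1−x)(1−xy))). Then the infimum of max{f₁(x,y), f₂(x), f₃(x,y)} over all such (x,y) equals (1+√(1−λ))²/2 if λ ≤ (√5−1)/2, and equals (1+λ)/(2λ) if λ ≥ (√5−1)/2. -/

import Mathlib

open scoped Kronecker ComplexOrder
open Matrix

noncomputable section

private theorem stmt7_aux1 (l s : ℝ) (hl0 : 0 < l) (hl1 : l ≤ 1)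
    (hs0 : 0 ≤ s) (hs2 : s ^ 2 = 1 - l) (hls : l ≤ s) :
    sInf {v : ℝ | ∃ x y : ℝ, x ∈ Set.Ioc (0:ℝ) 1 ∧ y ∈ Set.Ioc (0:ℝ) 1 ∧
        0 < 1 - x * (1 + y) / 2 + Real.sqrt ((1 - x) * (1 - x * y)) ∧
        v = max (max ((1 - s) ^ 2 / (2 * x * y)) ((1 + s) ^ 2 / (2 * x)))
            (l / (1 - x * (1 + y) / 2 + Real.sqrt ((1 - x) * (1 - x * y))))}
      = (1 + s) ^ 2 / 2 := by
  have hs1 : s < 1 := by nlinarith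
  have hspos : 0 < s := lt_of_lt_of_le hl0 hls
  have h1s : (0:ℝ) < 1 - s := by linarith
  have h1ps : (0:ℝ) < 1 + s := by linarith
  apply IsLeast.csInf_eq
  constructor
  · -- membership with x = 1, y = (1-s)^2/(1+s)^2
    have hsqrt0 : (1 - (1:ℝ)) * (1 - 1 * ((1 - s) ^ 2 / (1 + s) ^ 2)) = 0 := by ring
    have hDval : 1 - 1 * (1 + (1 - s) ^ 2 / (1 + s) ^ 2) / 2 + 0 = 2 * s / (1 + s) ^ 2 := by
      field_simp
      ring
    refine ⟨1, (1 - s) ^ 2 / (1 + s) ^ 2,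
      ⟨one_pos, le_refl 1⟩,
      ⟨div_pos (pow_pos h1s 2) (pow_pos h1ps 2),
        by rw [div_le_one (pow_pos h1ps 2)]; nlinarith⟩, ?_, ?_⟩
    · rw [hsqrt0, Real.sqrt_zero, hDval]
      positivity
    · rw [hsqrt0, Real.sqrt_zero]
      have e1 : (1 - s) ^ 2 / (2 * 1 * ((1 - s) ^ 2 / (1 + s) ^ 2)) = (1 + s) ^ 2 / 2 := by
        rw [div_eq_div_iff (by positivity) (by norm_num)]
        field_simp
      have e2 : (1 + s) ^ 2 / (2 * 1) = (1 + s) ^ 2 / 2 := by norm_num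
      have e3 : l / (1 - 1 * (1 + (1 - s) ^ 2 / (1 + s) ^ 2) / 2 + 0) ≤ (1 + s) ^ 2 / 2 := by
        rw [hDval, div_le_iff₀ (by positivity)]
        have h : (1 + s) ^ 2 / 2 * (2 * s / (1 + s) ^ 2) = s := by
          field_simp
        rw [h]
        exact hls
      rw [e1, e2, max_self]
      exact (max_eq_left e3).symm
  · rintro v ⟨x, y, ⟨hx0, hx1⟩, ⟨hy0, hy1⟩, hD, rfl⟩
    have h2 : (1 + s) ^ 2 / 2 ≤ (1 + s) ^ 2 / (2 * x) := by
      apply div_le_div_of_nonneg_left (by positivity) (by positivity) (by linarith)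
    exact h2.trans ((le_max_right _ _).trans (le_max_left _ _))

set_option maxHeartbeats 1000000 in
private theorem stmt7_aux2 (l s : ℝ) (hl0 : 0 < l) (hl1 : l ≤ 1)
    (hs0 : 0 ≤ s) (hs2 : s ^ 2 = 1 - l) (hsl : s ≤ l) :
    sInf {v : ℝ | ∃ x y : ℝ, x ∈ Set.Ioc (0:ℝ) 1 ∧ y ∈ Set.Ioc (0:ℝ) 1 ∧
        0 < 1 - x * (1 + y) / 2 + Real.sqrt ((1 - x) * (1 - x * y)) ∧
        v = max (max ((1 - s) ^ 2 / (2 * x * y)) ((1 + s) ^ 2 / (2 * x)))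
            (l / (1 - x * (1 + y) / 2 + Real.sqrt ((1 - x) * (1 - x * y))))}
      = (1 + l) / (2 * l) := by
  have hs1 : s < 1 := by nlinarith
  have h1s : (0:ℝ) < 1 - s := by linarith
  have h1ps : (0:ℝ) < 1 + s := by linarith
  have h1l : (0:ℝ) < 1 + l := by linarith
  have hcnn : 0 ≤ l ^ 2 + l - 1 := by nlinarith
  have hkey : (l - s) ^ 2 * (l + s) ^ 2 = (l ^ 2 + l - 1) ^ 2 := by
    linear_combination (-(2 * l ^ 2 - s ^ 2 + l - 1)) * hs2
  apply IsLeast.csInf_eq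
  constructor
  · -- membership with x = l(1+s)^2/(1+l), y = (1-s)^2/(1+s)^2
    have hsub1 : 1 - l * (1 + s) ^ 2 / (1 + l) = (l - s) ^ 2 / (1 + l) := by
      rw [eq_div_iff (ne_of_gt h1l), sub_mul, div_mul_cancel₀ _ (ne_of_gt h1l)]
      linear_combination (-l - 1) * hs2
    have exy : l * (1 + s) ^ 2 / (1 + l) * ((1 - s) ^ 2 / (1 + s) ^ 2)
        = l * (1 - s) ^ 2 / (1 + l) := by
      field_simp
    have hsub2 : 1 - l * (1 + s) ^ 2 / (1 + l) * ((1 - s) ^ 2 / (1 + s) ^ 2)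
        = (l + s) ^ 2 / (1 + l) := by
      rw [exy, eq_div_iff (ne_of_gt h1l), sub_mul, div_mul_cancel₀ _ (ne_of_gt h1l)]
      linear_combination (-l - 1) * hs2
    have hprod : (1 - l * (1 + s) ^ 2 / (1 + l))
        * (1 - l * (1 + s) ^ 2 / (1 + l) * ((1 - s) ^ 2 / (1 + s) ^ 2))
        = ((l ^ 2 + l - 1) / (1 + l)) ^ 2 := by
      rw [hsub1, hsub2, div_mul_div_comm, div_pow, hkey, ← pow_two]
    have hsqrt : Real.sqrt ((1 - l * (1 + s) ^ 2 / (1 + l))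
        * (1 - l * (1 + s) ^ 2 / (1 + l) * ((1 - s) ^ 2 / (1 + s) ^ 2)))
        = (l ^ 2 + l - 1) / (1 + l) := by
      rw [hprod, Real.sqrt_sq (div_nonneg hcnn h1l.le)]
    have hDval : 1 - l * (1 + s) ^ 2 / (1 + l) * (1 + (1 - s) ^ 2 / (1 + s) ^ 2) / 2
        + Real.sqrt ((1 - l * (1 + s) ^ 2 / (1 + l))
          * (1 - l * (1 + s) ^ 2 / (1 + l) * ((1 - s) ^ 2 / (1 + s) ^ 2)))
        = 2 * l ^ 2 / (1 + l) := by
      rw [hsqrt]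
      have hxy2 : l * (1 + s) ^ 2 / (1 + l) * (1 + (1 - s) ^ 2 / (1 + s) ^ 2)
          = (l * (1 + s) ^ 2 + l * (1 - s) ^ 2) / (1 + l) := by
        field_simp
      rw [hxy2]
      field_simp
      linear_combination (-2 * l) * hs2
    refine ⟨l * (1 + s) ^ 2 / (1 + l), (1 - s) ^ 2 / (1 + s) ^ 2,
      ⟨by positivity, by rw [div_le_one h1l]; nlinarith [sq_nonneg (l - s)]⟩,
      ⟨div_pos (pow_pos h1s 2) (pow_pos h1ps 2),
        by rw [div_le_one (pow_pos h1ps 2)]; nlinarith⟩, ?_, ?_⟩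
    · rw [hDval]; positivity
    · have e1 : (1 - s) ^ 2 / (2 * (l * (1 + s) ^ 2 / (1 + l)) * ((1 - s) ^ 2 / (1 + s) ^ 2))
          = (1 + l) / (2 * l) := by
        rw [div_eq_div_iff (by positivity) (by positivity)]
        field_simp
      have e2 : (1 + s) ^ 2 / (2 * (l * (1 + s) ^ 2 / (1 + l))) = (1 + l) / (2 * l) := by
        rw [div_eq_div_iff (by positivity) (by positivity)]
        field_simp
      have e3 : l / (2 * l ^ 2 / (1 + l)) = (1 + l) / (2 * l) := by
        rw [div_eq_div_iff (by positivity) (by positivity)]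
        field_simp
      rw [e1, e2, hDval, e3, max_self, max_self]
  · rintro v ⟨x, y, ⟨hx0, hx1⟩, ⟨hy0, hy1⟩, hD, rfl⟩
    by_contra hcon
    push_neg at hcon
    have h2l : (0:ℝ) < 2 * l := by linarith
    have hf1 : (1 - s) ^ 2 / (2 * x * y) < (1 + l) / (2 * l) :=
      lt_of_le_of_lt ((le_max_left _ _).trans (le_max_left _ _)) hcon
    have hf2 : (1 + s) ^ 2 / (2 * x) < (1 + l) / (2 * l) :=
      lt_of_le_of_lt ((le_max_right _ _).trans (le_max_left _ _)) hcon
    have hf3 : l / (1 - x * (1 + y) / 2 + Real.sqrt ((1 - x) * (1 - x * y)))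
        < (1 + l) / (2 * l) := lt_of_le_of_lt (le_max_right _ _) hcon
    rw [div_lt_div_iff₀ (by positivity) h2l] at hf1
    rw [div_lt_div_iff₀ (by positivity) h2l] at hf2
    rw [div_lt_div_iff₀ hD h2l] at hf3
    set R := Real.sqrt ((1 - x) * (1 - x * y)) with hRdef
    clear hcon
    have hR0 : 0 ≤ R := Real.sqrt_nonneg _
    have hxy1 : x * y ≤ 1 := mul_le_one₀ hx1 hy0.le hy1
    have hR2 : R ^ 2 = (1 - x) * (1 - x * y) :=
      Real.sq_sqrt (mul_nonneg (by linarith) (by linarith))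
    have hls2 : l * s ^ 2 = l * (1 - l) := by rw [hs2]
    have hRgt : l ^ 2 + l - 1 < (1 + l) * R := by linarith [hf1, hf2, hf3, hls2]
    have hsqgt : (l ^ 2 + l - 1) * (l ^ 2 + l - 1) < ((1 + l) * R) * ((1 + l) * R) :=
      mul_self_lt_mul_self hcnn hRgt
    have hA : (1 + l) * (1 - x) < (l - s) ^ 2 := by linarith [hf2, hls2, hs2]
    have hB : (1 + l) * (1 - x * y) < (l + s) ^ 2 := by linarith [hf1, hls2, hs2]
    have hA0 : 0 ≤ (1 + l) * (1 - x) := mul_nonneg h1l.le (by linarith)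
    have hM2 : (0:ℝ) < (l + s) ^ 2 := by positivity
    have hABlt : ((1 + l) * (1 - x)) * ((1 + l) * (1 - x * y))
        < (l - s) ^ 2 * (l + s) ^ 2 :=
      calc ((1 + l) * (1 - x)) * ((1 + l) * (1 - x * y))
          ≤ ((1 + l) * (1 - x)) * (l + s) ^ 2 :=
            mul_le_mul_of_nonneg_left hB.le hA0
        _ < (l - s) ^ 2 * (l + s) ^ 2 := mul_lt_mul_of_pos_right hA hM2
    have hRR : ((1 + l) * R) * ((1 + l) * R) = ((1 + l) * (1 - x)) * ((1 + l) * (1 - x * y)) := by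
      linear_combination (1 + l) ^ 2 * hR2
    rw [hkey] at hABlt
    rw [hRR] at hsqgt
    linarith

/-- The infimum of `max{f₁(x,y), f₂(x), f₃(x,y)}` over
`x, y ∈ (0,1]` with positive denominator equals `(1+√(1−λ))²/2` if `λ ≤ (√5−1)/2` and
`(1+λ)/(2λ)` if `λ ≥ (√5−1)/2`. -/
theorem stmt7 (l : ℝ) (hl : l ∈ Set.Ioc (0:ℝ) 1) :
    (l ≤ (Real.sqrt 5 - 1) / 2 →
      sInf {v : ℝ | ∃ x y : ℝ, x ∈ Set.Ioc (0:ℝ) 1 ∧ y ∈ Set.Ioc (0:ℝ) 1 ∧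
          0 < 1 - x * (1 + y) / 2 + Real.sqrt ((1 - x) * (1 - x * y)) ∧
          v = max (max ((1 - Real.sqrt (1 - l)) ^ 2 / (2 * x * y))
                       ((1 + Real.sqrt (1 - l)) ^ 2 / (2 * x)))
                  (l / (1 - x * (1 + y) / 2 + Real.sqrt ((1 - x) * (1 - x * y))))}
        = (1 + Real.sqrt (1 - l)) ^ 2 / 2) ∧
    ((Real.sqrt 5 - 1) / 2 ≤ l →
      sInf {v : ℝ | ∃ x y : ℝ, x ∈ Set.Ioc (0:ℝ) 1 ∧ y ∈ Set.Ioc (0:ℝ) 1 ∧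
          0 < 1 - x * (1 + y) / 2 + Real.sqrt ((1 - x) * (1 - x * y)) ∧
          v = max (max ((1 - Real.sqrt (1 - l)) ^ 2 / (2 * x * y))
                       ((1 + Real.sqrt (1 - l)) ^ 2 / (2 * x)))
                  (l / (1 - x * (1 + y) / 2 + Real.sqrt ((1 - x) * (1 - x * y))))}
        = (1 + l) / (2 * l)) := by
  obtain ⟨hl0, hl1⟩ := hl
  have hs0 : 0 ≤ Real.sqrt (1 - l) := Real.sqrt_nonneg _
  have hs2 : Real.sqrt (1 - l) ^ 2 = 1 - l := Real.sq_sqrt (by linarith)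
  have h5 : Real.sqrt 5 ^ 2 = 5 := Real.sq_sqrt (by norm_num)
  have h50 : 0 ≤ Real.sqrt 5 := Real.sqrt_nonneg _
  constructor
  · intro hcase
    have hls : l ≤ Real.sqrt (1 - l) := by nlinarith
    exact stmt7_aux1 l _ hl0 hl1 hs0 hs2 hls
  · intro hcase
    have hsl : Real.sqrt (1 - l) ≤ l := by nlinarith
    exact stmt7_aux2 l _ hl0 hl1 hs0 hs2 hsl
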